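/- Let M be a d×d real matrix and γ > 0. All complex eigenvalues of the 2d×2d block matrix T_M = [[0, −I_d],[M, γ I_d]] have positive real part if and only if every complex eigenvalue a + ib of M (a, b ∈ ℝ) satisfies a > 0 and γ² a > b². -/
import Mathlib

open Matrix

lemma mem_spec_iff' {n : Type*} [Fintype n] [DecidableEq n] (A : Matrix n n ℂ) (z : ℂ) :
    z ∈ spectrum ℂ A ↔ (z • (1 : Matrix n n ℂ) - A).det = 0 := by
  rw [spectrum.mem_iff, Matrix.isUnit_iff_isUnit_det, isUnit_iff_ne_zero, not_not,
    Algebra.algebraMap_eq_smul_one]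

lemma map_blocks' {d : ℕ} (γ : ℝ) (M : Matrix (Fin d) (Fin d) ℝ) :
    ((Matrix.fromBlocks (0 : Matrix (Fin d) (Fin d) ℝ) (-1) M (γ • 1)).map Complex.ofReal)
      = Matrix.fromBlocks (0 : Matrix (Fin d) (Fin d) ℂ) (-1 : Matrix (Fin d) (Fin d) ℂ) (M.map Complex.ofReal) ((γ : ℂ) • 1) := by
  ext (i | i) (j | j) <;>
    simp [Matrix.map_apply, Matrix.one_apply, apply_ite Complex.ofReal]

lemma det_smul_zero_iff' {n : Type*} [Fintype n] [DecidableEq n] {c : ℂ} (hc : c ≠ 0)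
    (A : Matrix n n ℂ) : (c • A).det = 0 ↔ A.det = 0 := by
  rw [Matrix.det_smul, mul_eq_zero]
  simp [pow_ne_zero _ hc]

lemma det_key' {d : ℕ} (γ : ℝ) (hγ : 0 < γ) (Mc : Matrix (Fin d) (Fin d) ℂ) (z : ℂ) :
    ((z • (1 : Matrix (Fin d ⊕ Fin d) (Fin d ⊕ Fin d) ℂ)) -
        Matrix.fromBlocks (0 : Matrix (Fin d) (Fin d) ℂ) (-1 : Matrix (Fin d) (Fin d) ℂ)
          Mc ((γ : ℂ) • 1)).det = 0 ↔
      ((((γ : ℂ) * z - z ^ 2) • (1 : Matrix (Fin d) (Fin d) ℂ)) - Mc).det = 0 := by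
  have h1 : (z • (1 : Matrix (Fin d ⊕ Fin d) (Fin d ⊕ Fin d) ℂ)) -
      Matrix.fromBlocks (0 : Matrix (Fin d) (Fin d) ℂ) (-1 : Matrix (Fin d) (Fin d) ℂ)
        Mc ((γ : ℂ) • 1)
      = Matrix.fromBlocks (z • 1) 1 (-Mc) ((z - γ) • 1) := by
    ext (i | i) (j | j) <;>
      simp [Matrix.one_apply, apply_ite (z * ·), apply_ite (γ * ·), sub_smul, mul_comm]
  have hγc : ((γ:ℂ)) ≠ 0 := by exact_mod_cast hγ.ne'
  rw [h1]
  rcases eq_or_ne z 0 with rfl | hz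
  · have hne : ((0:ℂ) - (γ:ℂ)) ≠ 0 := by simpa [sub_eq_zero, eq_comm] using hγc
    have hdet : IsUnit (((0:ℂ) - (γ:ℂ)) • (1 : Matrix (Fin d) (Fin d) ℂ)).det := by
      rw [Matrix.det_smul, Matrix.det_one, mul_one]
      exact (pow_ne_zero _ hne).isUnit
    haveI := Matrix.invertibleOfIsUnitDet _ hdet
    have hinv : ⅟(((0:ℂ) - (γ:ℂ)) • (1 : Matrix (Fin d) (Fin d) ℂ))
        = ((0:ℂ) - (γ:ℂ))⁻¹ • 1 := by
      apply invOf_eq_right_inv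
      rw [Matrix.smul_mul, Matrix.mul_smul, Matrix.one_mul, smul_smul,
        mul_inv_cancel₀ hne, one_smul]
    rw [Matrix.det_fromBlocks₂₂, hinv]
    have e1 : ((0:ℂ) • (1 : Matrix (Fin d) (Fin d) ℂ)) -
        (1 : Matrix (Fin d) (Fin d) ℂ) * (((0:ℂ) - (γ:ℂ))⁻¹ • 1) * (-Mc)
        = ((0:ℂ) - (γ:ℂ))⁻¹ • Mc := by
      simp [Matrix.mul_smul, Matrix.smul_mul]
    have e2 : (((γ:ℂ) * 0 - 0 ^ 2) • (1 : Matrix (Fin d) (Fin d) ℂ)) - Mc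
        = (-1 : ℂ) • Mc := by
      simp
    rw [e1, e2, mul_eq_zero, det_smul_zero_iff' (inv_ne_zero hne),
      det_smul_zero_iff' (by norm_num : (-1:ℂ) ≠ 0)]
    have : (((0:ℂ) - (γ:ℂ)) • (1 : Matrix (Fin d) (Fin d) ℂ)).det ≠ 0 := by
      rw [Matrix.det_smul, Matrix.det_one, mul_one]
      exact pow_ne_zero _ hne
    tauto
  · have hdet : IsUnit ((z • (1 : Matrix (Fin d) (Fin d) ℂ))).det := by
      rw [Matrix.det_smul, Matrix.det_one, mul_one]
      exact (pow_ne_zero _ hz).isUnit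
    haveI := Matrix.invertibleOfIsUnitDet _ hdet
    have hinv : ⅟(z • (1 : Matrix (Fin d) (Fin d) ℂ)) = z⁻¹ • 1 := by
      apply invOf_eq_right_inv
      rw [Matrix.smul_mul, Matrix.mul_smul, Matrix.one_mul, smul_smul,
        mul_inv_cancel₀ hz, one_smul]
    rw [Matrix.det_fromBlocks₁₁, hinv]
    have e1 : ((z - (γ:ℂ)) • (1 : Matrix (Fin d) (Fin d) ℂ)) - (-Mc) * (z⁻¹ • 1) * 1
        = (z - (γ:ℂ)) • 1 + z⁻¹ • Mc := by
      simp [Matrix.mul_smul, Matrix.smul_mul, sub_neg_eq_add]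
    have e2 : z • ((z - (γ:ℂ)) • (1 : Matrix (Fin d) (Fin d) ℂ) + z⁻¹ • Mc)
        = (-1 : ℂ) • ((((γ:ℂ) * z - z ^ 2) • 1) - Mc) := by
      rw [smul_add, smul_smul, smul_smul, mul_inv_cancel₀ hz, one_smul]
      have h3 : z * (z - (γ:ℂ)) = -((γ:ℂ) * z - z ^ 2) := by ring
      rw [h3, neg_smul, neg_one_smul, neg_sub]
      abel
    have e3 : ((z - (γ:ℂ)) • (1 : Matrix (Fin d) (Fin d) ℂ) + z⁻¹ • Mc).det = 0
        ↔ ((((γ:ℂ) * z - z ^ 2) • (1 : Matrix (Fin d) (Fin d) ℂ)) - Mc).det = 0 := by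
      rw [← det_smul_zero_iff' hz ((z - (γ:ℂ)) • 1 + z⁻¹ • Mc), e2,
        det_smul_zero_iff' (by norm_num : (-1:ℂ) ≠ 0)]
    rw [e1, mul_eq_zero]
    have hne : ((z • (1 : Matrix (Fin d) (Fin d) ℂ))).det ≠ 0 := by
      rw [Matrix.det_smul, Matrix.det_one, mul_one]
      exact pow_ne_zero _ hz
    tauto

lemma spec_block_iff' {d : ℕ} (γ : ℝ) (hγ : 0 < γ) (Mc : Matrix (Fin d) (Fin d) ℂ) (z : ℂ) :
    z ∈ spectrum ℂ (Matrix.fromBlocks (0 : Matrix (Fin d) (Fin d) ℂ)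
        (-1 : Matrix (Fin d) (Fin d) ℂ) Mc ((γ : ℂ) • 1)) ↔
      ((γ : ℂ) * z - z ^ 2) ∈ spectrum ℂ Mc := by
  rw [mem_spec_iff', mem_spec_iff', det_key' γ hγ]

theorem stmt1 (d : ℕ) (hd : 1 ≤ d) (γ : ℝ) (hγ : 0 < γ)
    (M : Matrix (Fin d) (Fin d) ℝ) :
    (∀ z ∈ spectrum ℂ
        (((Matrix.fromBlocks (0 : Matrix (Fin d) (Fin d) ℝ) (-1) M (γ • 1)).map
            Complex.ofReal : Matrix (Fin d ⊕ Fin d) (Fin d ⊕ Fin d) ℂ)),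
      0 < z.re)
    ↔ (∀ z ∈ spectrum ℂ ((M.map Complex.ofReal : Matrix (Fin d) (Fin d) ℂ)),
        0 < z.re ∧ z.im ^ 2 < γ ^ 2 * z.re) := by
  rw [map_blocks']
  have key_re : ∀ w : ℂ, ((γ:ℂ) * w - w ^ 2).re = γ * w.re - (w.re ^ 2 - w.im ^ 2) := by
    intro w
    simp [Complex.mul_re, pow_two]
  have key_im : ∀ w : ℂ, ((γ:ℂ) * w - w ^ 2).im = γ * w.im - 2 * w.re * w.im := by
    intro w
    simp [Complex.mul_im, pow_two]
    ring
  constructor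
  · intro h μ hμ
    obtain ⟨w, hw⟩ := IsAlgClosed.exists_pow_nat_eq ((γ:ℂ) ^ 2 - 4 * μ)
      (by norm_num : 0 < 2)
    have hl1 : (γ:ℂ) * (((γ:ℂ) + w) / 2) - (((γ:ℂ) + w) / 2) ^ 2 = μ := by
      linear_combination (-(1:ℂ)/4) * hw
    have hl2 : (γ:ℂ) * (((γ:ℂ) - w) / 2) - (((γ:ℂ) - w) / 2) ^ 2 = μ := by
      linear_combination (-(1:ℂ)/4) * hw
    have p1 : 0 < (((γ:ℂ) + w) / 2).re := by
      apply h
      rw [spec_block_iff' γ hγ, hl1]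
      exact hμ
    have p2' : 0 < (((γ:ℂ) - w) / 2).re := by
      apply h
      rw [spec_block_iff' γ hγ, hl2]
      exact hμ
    have hdiff : (((γ:ℂ) - w) / 2) = (γ:ℂ) - ((γ:ℂ) + w) / 2 := by ring
    have p2 : 0 < γ - (((γ:ℂ) + w) / 2).re := by
      rw [hdiff] at p2'
      simpa using p2'
    set p := (((γ:ℂ) + w) / 2).re with hp
    set q := (((γ:ℂ) + w) / 2).im with hq
    have ha : μ.re = γ * p - (p ^ 2 - q ^ 2) := by rw [← hl1, key_re]
    have hb : μ.im = γ * q - 2 * p * q := by rw [← hl1, key_im]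
    rw [ha, hb]
    constructor
    · nlinarith [mul_pos p1 p2, sq_nonneg q]
    · nlinarith [mul_pos (mul_pos p1 p2) (mul_pos hγ hγ),
        mul_nonneg (mul_pos p1 p2).le (sq_nonneg q), sq_nonneg q]
  · intro h z hz
    rw [spec_block_iff' γ hγ] at hz
    obtain ⟨ha, hb⟩ := h _ hz
    rw [key_re] at ha
    rw [key_im, key_re] at hb
    set p := z.re
    set q := z.im
    by_contra hp
    push_neg at hp
    have h2 : 0 < γ - p := by linarith
    have h3 : 0 ≤ (-p) * ((γ - p) * (γ ^ 2 + 4 * q ^ 2)) :=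
      mul_nonneg (neg_nonneg.mpr hp) (by positivity)
    nlinarith [h3]
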